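/- If dim V ≥ 3, then G(V) is connected with diameter exactly 2; concretely, there exist two distinct non-adjacent vertices, and for any two distinct nontrivial proper subspaces W₁, W₂ of V with W₁ + W₂ ≠ V there exists a nontrivial proper subspace W₃ with W₁ + W₃ = V and W₂ + W₃ = V. -/

import Mathlib

open Module

/-- The subspace sum graph of a vector space `V` over a field `K`. -/
def subspaceSumGraph (K V : Type*) [Field K] [AddCommGroup V] [Module K V] :
    SimpleGraph {W : Submodule K V // W ≠ ⊥ ∧ W ≠ ⊤} where
  Adj W₁ W₂ := W₁ ≠ W₂ ∧ (W₁ : Submodule K V) ⊔ (W₂ : Submodule K V) = ⊤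
  symm := by
    constructor
    intro a b h
    exact ⟨h.1.symm, by rw [sup_comm]; exact h.2⟩
  loopless := by
    constructor
    intro a h
    exact h.1 rfl

lemma subspaceSumGraph_key {K V : Type*} [Field K] [AddCommGroup V] [Module K V]
    [FiniteDimensional K V] (hdim : 3 ≤ finrank K V) (W₁ W₂ : Submodule K V)
    (h1 : W₁ ≠ ⊥) (h2 : W₂ ≠ ⊥) :
    ∃ W₃ : Submodule K V, W₃ ≠ ⊥ ∧ W₃ ≠ ⊤ ∧ W₁ ⊔ W₃ = ⊤ ∧ W₂ ⊔ W₃ = ⊤ := by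
  obtain ⟨x, hxW, hx⟩ := Submodule.exists_mem_ne_zero_of_ne_bot h1
  obtain ⟨y, hyW, hy⟩ := Submodule.exists_mem_ne_zero_of_ne_bot h2
  have hex : ∃ f : Module.Dual K V, f x ≠ 0 ∧ f y ≠ 0 := by
    obtain ⟨f, hf⟩ : ∃ f : Module.Dual K V, f x ≠ 0 := by
      by_contra h; push_neg at h
      exact hx ((Module.forall_dual_apply_eq_zero_iff K x).mp h)
    obtain ⟨g, hg⟩ : ∃ g : Module.Dual K V, g y ≠ 0 := by
      by_contra h; push_neg at h
      exact hy ((Module.forall_dual_apply_eq_zero_iff K y).mp h)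
    by_cases hfy : f y ≠ 0
    · exact ⟨f, hf, hfy⟩
    by_cases hgx : g x ≠ 0
    · exact ⟨g, hgx, hg⟩
    push_neg at hfy hgx
    exact ⟨f + g, by simpa [hgx] using hf, by simpa [hfy] using hg⟩
  obtain ⟨f, hfx, hfy⟩ := hex
  have hfs : Function.Surjective f := by
    apply LinearMap.surjective_of_ne_zero
    intro h0
    rw [h0] at hfx
    simp at hfx
  have hco : IsCoatom (LinearMap.ker f) := LinearMap.isCoatom_ker_of_surjective hfs
  have hxk : x ∉ LinearMap.ker f := fun h => hfx (LinearMap.mem_ker.mp h)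
  have hyk : y ∉ LinearMap.ker f := fun h => hfy (LinearMap.mem_ker.mp h)
  refine ⟨LinearMap.ker f, ?_, hco.1, ?_, ?_⟩
  · intro hb
    have h3 := LinearMap.finrank_range_add_finrank_ker f
    rw [hb, finrank_bot] at h3
    have hr : finrank K (LinearMap.range f) ≤ finrank K K := Submodule.finrank_le _
    rw [Module.finrank_self] at hr
    omega
  · refine hco.2 _ (lt_of_le_of_ne le_sup_right ?_)
    intro h
    exact hxk (h ▸ Submodule.mem_sup_left hxW)
  · refine hco.2 _ (lt_of_le_of_ne le_sup_right ?_)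
    intro h
    exact hyk (h ▸ Submodule.mem_sup_left hyW)

theorem subspaceSumGraph_connected_diam_two (K V : Type*) [Field K] [AddCommGroup V]
    [Module K V] [FiniteDimensional K V] (hdim : 3 ≤ finrank K V) :
    (subspaceSumGraph K V).Connected ∧ (subspaceSumGraph K V).diam = 2 ∧
    (∃ W₁ W₂ : {W : Submodule K V // W ≠ ⊥ ∧ W ≠ ⊤}, W₁ ≠ W₂ ∧
      ¬ (subspaceSumGraph K V).Adj W₁ W₂) ∧
    (∀ W₁ W₂ : Submodule K V, W₁ ≠ ⊥ → W₁ ≠ ⊤ → W₂ ≠ ⊥ → W₂ ≠ ⊤ → W₁ ≠ W₂ →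
      W₁ ⊔ W₂ ≠ ⊤ → ∃ W₃ : Submodule K V, W₃ ≠ ⊥ ∧ W₃ ≠ ⊤ ∧
        W₁ ⊔ W₃ = ⊤ ∧ W₂ ⊔ W₃ = ⊤) := by
  have hV : Nontrivial V := Module.nontrivial_of_finrank_pos (by omega : 0 < finrank K V)
  -- two distinct non-adjacent vertices: two distinct lines
  obtain ⟨x, hx⟩ := exists_ne (0 : V)
  have hxline : finrank K (K ∙ x) = 1 := finrank_span_singleton hx
  have hline_bot : (K ∙ x) ≠ ⊥ := by
    simpa [Submodule.span_singleton_eq_bot] using hx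
  have hline_top : (K ∙ x) ≠ ⊤ := by
    intro h
    rw [h, finrank_top] at hxline
    omega
  obtain ⟨y, hy⟩ : ∃ y : V, y ∉ (K ∙ x) := by
    by_contra h; push_neg at h
    exact hline_top (Submodule.eq_top_iff'.mpr h)
  have hy0 : y ≠ 0 := fun h => hy (h ▸ Submodule.zero_mem _)
  have hyline : finrank K (K ∙ y) = 1 := finrank_span_singleton hy0
  have hyline_bot : (K ∙ y) ≠ ⊥ := by
    simpa [Submodule.span_singleton_eq_bot] using hy0
  have hyline_top : (K ∙ y) ≠ ⊤ := by
    intro h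
    rw [h, finrank_top] at hyline
    omega
  have hne_lines : (K ∙ x) ≠ (K ∙ y) := by
    intro h
    exact hy (h ▸ Submodule.mem_span_singleton_self y)
  have hsup_ne : (K ∙ x) ⊔ (K ∙ y) ≠ ⊤ := by
    intro h
    have := Submodule.finrank_sup_add_finrank_inf_eq (K ∙ x) (K ∙ y)
    rw [h, finrank_top, hxline, hyline] at this
    omega
  set u₀ : {W : Submodule K V // W ≠ ⊥ ∧ W ≠ ⊤} := ⟨K ∙ x, hline_bot, hline_top⟩
  set v₀ : {W : Submodule K V // W ≠ ⊥ ∧ W ≠ ⊤} := ⟨K ∙ y, hyline_bot, hyline_top⟩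
  have hu₀v₀ : u₀ ≠ v₀ := fun h => hne_lines (congrArg Subtype.val h)
  have hnadj : ¬ (subspaceSumGraph K V).Adj u₀ v₀ := fun h => hsup_ne h.2
  -- any two vertices are adjacent or have a common neighbor
  have hcommon : ∀ u v : {W : Submodule K V // W ≠ ⊥ ∧ W ≠ ⊤},
      ∃ w : {W : Submodule K V // W ≠ ⊥ ∧ W ≠ ⊤},
        (subspaceSumGraph K V).Adj u w ∧ (subspaceSumGraph K V).Adj w v := by
    intro u v
    obtain ⟨W₃, h3b, h3t, hs1, hs2⟩ := subspaceSumGraph_key hdim u.1 v.1 u.2.1 v.2.1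
    refine ⟨⟨W₃, h3b, h3t⟩, ⟨?_, hs1⟩, ⟨?_, by rw [sup_comm]; exact hs2⟩⟩
    · intro h
      have heq : u.1 = W₃ := congrArg Subtype.val h
      rw [heq, sup_idem] at hs1
      exact h3t hs1
    · intro h
      have heq : W₃ = v.1 := congrArg Subtype.val h
      rw [← heq, sup_idem] at hs2
      exact h3t hs2
  have hreach : ∀ u v : {W : Submodule K V // W ≠ ⊥ ∧ W ≠ ⊤},
      (subspaceSumGraph K V).Reachable u v := by
    intro u v
    obtain ⟨w, h1, h2⟩ := hcommon u v
    exact (h1.reachable).trans h2.reachable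
  have hconn : (subspaceSumGraph K V).Connected := by
    have : Nonempty {W : Submodule K V // W ≠ ⊥ ∧ W ≠ ⊤} := ⟨u₀⟩
    exact ⟨hreach⟩
  have hediam_le : (subspaceSumGraph K V).ediam ≤ 2 := by
    apply SimpleGraph.ediam_le_of_edist_le
    intro u v
    obtain ⟨w, h1, h2⟩ := hcommon u v
    have := SimpleGraph.edist_le ((h1.toWalk).append h2.toWalk)
    simpa using this
  have hedist2 : (2 : ℕ∞) ≤ (subspaceSumGraph K V).edist u₀ v₀ := by
    have h0 : (subspaceSumGraph K V).edist u₀ v₀ ≠ 0 :=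
      fun h => hu₀v₀ (SimpleGraph.edist_eq_zero_iff.mp h)
    have h1 : (subspaceSumGraph K V).edist u₀ v₀ ≠ 1 :=
      fun h => hnadj (SimpleGraph.edist_eq_one_iff_adj.mp h)
    have hpos : 1 ≤ (subspaceSumGraph K V).edist u₀ v₀ :=
      Order.one_le_iff_pos.mpr (pos_iff_ne_zero.mpr h0)
    have : (1 : ℕ∞) < (subspaceSumGraph K V).edist u₀ v₀ := lt_of_le_of_ne hpos (Ne.symm h1)
    exact (ENat.add_one_le_iff (by norm_num)).mpr this
  have hediam : (subspaceSumGraph K V).ediam = 2 :=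
    le_antisymm hediam_le (le_trans hedist2 SimpleGraph.edist_le_ediam)
  refine ⟨hconn, ?_, ⟨u₀, v₀, hu₀v₀, hnadj⟩, ?_⟩
  · rw [SimpleGraph.diam, hediam]; rfl
  · intro W₁ W₂ h1b h1t h2b h2t hne hsup
    exact subspaceSumGraph_key hdim W₁ W₂ h1b h2b
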